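/- If (H, f) is a minimal non-strictly f-degenerate pair over a graph G (H has no strictly f-degenerate transversal, but removing all list vertices of any single vertex of G yields a cover that has one), then G is connected and f(v,1) + f(v,2) + … + f(v,κ) ≤ deg_G(v) for every vertex v of G. -/

import Mathlib

/-- A cover of a graph `G` with lists of size `κ`. -/
structure GraphCover {V : Type*} (G : SimpleGraph V) (κ : ℕ) where
  H : SimpleGraph (V × Fin κ)
  indep : ∀ (v : V) (i j : Fin κ), ¬ H.Adj (v, i) (v, j)
  matchingL : ∀ (u v : V) (i j j' : Fin κ),
    H.Adj (u, i) (v, j) → H.Adj (u, i) (v, j') → j = j'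
  matchingR : ∀ (u v : V) (i i' j : Fin κ),
    H.Adj (u, i) (v, j) → H.Adj (u, i') (v, j) → i = i'
  support : ∀ (u v : V) (i j : Fin κ), H.Adj (u, i) (v, j) → G.Adj u v

/-- The subgraph of the cover `H` induced by the partial transversal choosing `(v, g v)`
for the vertices `v ∈ S`, viewed as a graph on `V` (vertices outside `S` are isolated). -/
def coverGraphOn {V : Type*} {G : SimpleGraph V} {κ : ℕ} (C : GraphCover G κ)
    (S : Set V) (g : V → Fin κ) : SimpleGraph V where
  Adj u w := u ∈ S ∧ w ∈ S ∧ C.H.Adj (u, g u) (w, g w)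
  symm := by
    constructor
    rintro u w ⟨hu, hw, h⟩
    exact ⟨hw, hu, h.symm⟩
  loopless := by
    constructor
    rintro u ⟨-, -, h⟩
    exact C.H.irrefl h

/-- The cover `H` restricted to the lists of the vertices in `S` has a strictly
`f`-degenerate transversal: there is a choice `g` such that every nonempty subgraph of
the chosen transversal graph lying inside `S` has a vertex `(v, g v)` of degree less
than `f (v, g v)`. -/
def HasSDTOn {V : Type*} {G : SimpleGraph V} {κ : ℕ} (C : GraphCover G κ)
    (f : V × Fin κ → ℕ) (S : Set V) : Prop :=
  ∃ g : V → Fin κ, ∀ Γ : (coverGraphOn C S g).Subgraph, Γ.verts ⊆ S → Γ.verts.Nonempty →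
    ∃ v ∈ Γ.verts, (Γ.neighborSet v).ncard < f (v, g v)

/-- Transfer lemma: if `g` agrees with `g'` on a set `A ⊆ S'`, and `g'` witnesses the
SDT property on `S'`, then any subgraph of `coverGraphOn C S g` whose vertex set meets
`A` and whose edges do not leave `A` (from `A`) contains a low-degree vertex. -/
lemma transfer_sdt {V : Type*} {G : SimpleGraph V} {κ : ℕ} (C : GraphCover G κ)
    (f : V × Fin κ → ℕ) {S' A : Set V} (hA : A ⊆ S') {g g' : V → Fin κ}
    (hg : ∀ x ∈ A, g x = g' x)
    (hw : ∀ Γ : (coverGraphOn C S' g').Subgraph, Γ.verts ⊆ S' → Γ.verts.Nonempty →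
      ∃ v ∈ Γ.verts, (Γ.neighborSet v).ncard < f (v, g' v))
    {S : Set V} (Γ : (coverGraphOn C S g).Subgraph)
    (hcl : ∀ u ∈ Γ.verts ∩ A, ∀ w, Γ.Adj u w → w ∈ A)
    (hne : (Γ.verts ∩ A).Nonempty) :
    ∃ u ∈ Γ.verts, (Γ.neighborSet u).ncard < f (u, g u) := by
  let Γ' : (coverGraphOn C S' g').Subgraph :=
    { verts := Γ.verts ∩ A
      Adj := fun u w => Γ.Adj u w ∧ u ∈ A ∧ w ∈ A
      adj_sub := by
        rintro u w ⟨h, hu, hw'⟩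
        obtain ⟨-, -, hH⟩ := Γ.adj_sub h
        exact ⟨hA hu, hA hw', by rwa [hg u hu, hg w hw'] at hH⟩
      edge_vert := by
        rintro u w ⟨h, hu, hw'⟩
        exact ⟨Γ.edge_vert h, hu⟩
      symm := by
        constructor
        rintro u w ⟨h, hu, hw'⟩
        exact ⟨h.symm, hw', hu⟩ }
  obtain ⟨u, ⟨huΓ, huA⟩, hlt⟩ := hw Γ' (fun x hx => hA hx.2) hne
  refine ⟨u, huΓ, ?_⟩
  have hns : Γ'.neighborSet u = Γ.neighborSet u := by
    ext w
    constructor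
    · rintro ⟨h, -, -⟩; exact h
    · intro h
      exact ⟨h, huA, hcl u ⟨huΓ, huA⟩ w h⟩
  rw [hns, ← hg u huA] at hlt
  exact hlt

/-- If `(H, f)` is a minimal non-strictly `f`-degenerate pair over `G` (`H` has no
strictly `f`-degenerate transversal, but deleting the list `L_v` of any single vertex `v`
yields a cover with one), then `G` is connected and
`f(v,1) + ⋯ + f(v,κ) ≤ deg_G(v)` for every vertex `v`. -/
theorem minimal_pair_connected_and_degree {V : Type*} [Fintype V] (G : SimpleGraph V)
    [DecidableRel G.Adj] {κ : ℕ} (C : GraphCover G κ) (f : V × Fin κ → ℕ)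
    (hno : ¬ HasSDTOn C f Set.univ)
    (hmin : ∀ v : V, HasSDTOn C f {v}ᶜ) :
    G.Connected ∧ ∀ v : V, (∑ i : Fin κ, f (v, i)) ≤ G.degree v := by
  classical
  constructor
  · -- connectivity
    have hV : Nonempty V := by
      by_contra h
      rw [not_nonempty_iff] at h
      exact hno ⟨fun x => isEmptyElim x, fun Γ _ hne => (hne.elim fun x _ => isEmptyElim x)⟩
    rw [SimpleGraph.connected_iff]
    refine ⟨?_, hV⟩
    by_contra h
    simp only [SimpleGraph.Preconnected, not_forall] at h
    obtain ⟨a, b, hab⟩ := h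
    obtain ⟨ga, hga⟩ := hmin a
    obtain ⟨gb, hgb⟩ := hmin b
    apply hno
    refine ⟨fun x => if G.Reachable a x then gb x else ga x, fun Γ _ hne => ?_⟩
    by_cases hA : (Γ.verts ∩ {x | G.Reachable a x}).Nonempty
    · refine transfer_sdt C f (S' := ({b}ᶜ : Set V)) (A := {x | G.Reachable a x})
        (fun x hx hxb => hab (by rwa [show x = b from hxb] at hx))
        (fun x hx => if_pos hx) hgb Γ ?_ hA
      intro u hu w hw
      obtain ⟨-, -, hH⟩ := Γ.adj_sub hw
      exact hu.2.trans (C.support u w _ _ hH).reachable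
    · refine transfer_sdt C f (S' := ({a}ᶜ : Set V)) (A := {x | G.Reachable a x}ᶜ)
        (fun x hx hxa => hx (by rw [show x = a from hxa]; exact SimpleGraph.Reachable.refl a))
        (fun x hx => if_neg hx) hga Γ ?_ ?_
      · intro u hu w hw hra
        obtain ⟨-, -, hH⟩ := Γ.adj_sub hw
        exact hu.2 (hra.trans (C.support u w _ _ hH).symm.reachable)
      · obtain ⟨x, hx⟩ := hne
        exact ⟨x, hx, fun hr => hA ⟨x, hx, hr⟩⟩
  · -- degree bound
    intro v
    by_contra hlt
    push_neg at hlt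
    obtain ⟨g0, hg0⟩ := hmin v
    set F : Fin κ → Finset V :=
      fun i => Finset.univ.filter (fun u => C.H.Adj (v, i) (u, g0 u)) with hF
    have hsub : Finset.univ.biUnion F ⊆ G.neighborFinset v := by
      intro u hu
      simp only [hF, Finset.mem_biUnion, Finset.mem_filter, Finset.mem_univ, true_and] at hu
      obtain ⟨i, hi⟩ := hu
      exact (SimpleGraph.mem_neighborFinset G v u).mpr (C.support v u i (g0 u) hi)
    have hdisj : ∀ i ∈ (Finset.univ : Finset (Fin κ)), ∀ j ∈ (Finset.univ : Finset (Fin κ)),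
        i ≠ j → Disjoint (F i) (F j) := by
      intro i _ j _ hij
      rw [Finset.disjoint_left]
      intro u hui huj
      simp only [hF, Finset.mem_filter, Finset.mem_univ, true_and] at hui huj
      exact hij (C.matchingR v u i j (g0 u) hui huj)
    have hsum : ∑ i : Fin κ, (F i).card ≤ G.degree v := by
      rw [← Finset.card_biUnion hdisj, ← SimpleGraph.card_neighborFinset_eq_degree]
      exact Finset.card_le_card hsub
    have hex : ∃ i : Fin κ, (F i).card < f (v, i) := by
      by_contra hno'
      push_neg at hno'
      exact absurd (le_trans (Finset.sum_le_sum fun i _ => hno' i) hsum) (not_le.mpr hlt)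
    obtain ⟨i, hi⟩ := hex
    apply hno
    refine ⟨Function.update g0 v i, fun Γ _ hne => ?_⟩
    by_cases hv : v ∈ Γ.verts
    · refine ⟨v, hv, ?_⟩
      have hsub2 : Γ.neighborSet v ⊆ ↑(F i) := by
        intro w hw
        obtain ⟨-, -, hH⟩ := Γ.adj_sub hw
        have hwv : w ≠ v := by
          rintro rfl
          rw [Function.update_self] at hH
          exact C.indep w i _ hH
        rw [Function.update_self, Function.update_of_ne hwv] at hH
        simp only [hF, Finset.coe_filter, Set.mem_setOf_eq, Finset.mem_univ, true_and]
        exact hH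
      have hle := Set.ncard_le_ncard hsub2 (Finset.finite_toSet _)
      rw [Set.ncard_coe_finset] at hle
      calc (Γ.neighborSet v).ncard ≤ (F i).card := hle
        _ < f (v, i) := hi
        _ = f (v, Function.update g0 v i v) := by rw [Function.update_self]
    · refine transfer_sdt C f (S' := ({v}ᶜ : Set V)) (A := ({v}ᶜ : Set V)) subset_rfl
        (fun x hx => Function.update_of_ne hx i g0) hg0 Γ ?_ ?_
      · intro u _ w hw hwv
        exact hv ((show w = v from hwv) ▸ Γ.edge_vert hw.symm)
      · obtain ⟨x, hx⟩ := hne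
        exact ⟨x, hx, fun hxv => hv (by rwa [show x = v from hxv] at hx)⟩
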